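/- Let X be a real Banach space. Then X is midpoint locally uniformly rotund (MLUR) if and only if for every r ∈ (0, 1) and all sequences (x_n), (y_n) in X such that ‖x_n‖ → 1, ‖y_n‖ → 1 and r·x_n + (1 − r)·y_n converges to some z ∈ X with ‖z‖ = 1, it follows that ‖x_n − y_n‖ → 0. -/
import Mathlib


open Filter

/-- `X` is midpoint locally uniformly rotund (MLUR). -/
def MLUR (X : Type*) [NormedAddCommGroup X] [NormedSpace ℝ X] : Prop :=
  ∀ (x y : ℕ → X) (z : X),
    Tendsto (fun n => ‖x n‖) atTop (nhds 1) →
    Tendsto (fun n => ‖y n‖) atTop (nhds 1) →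
    Tendsto (fun n => (1 / 2 : ℝ) • (x n + y n)) atTop (nhds z) → ‖z‖ = 1 →
    Tendsto (fun n => ‖x n - y n‖) atTop (nhds 0)

lemma mlur_aux {X : Type*} [NormedAddCommGroup X] [NormedSpace ℝ X] (h : MLUR X)
    {r : ℝ} (hr0 : 0 < r) (hr : r ≤ 1 / 2) (x y : ℕ → X) (z : X)
    (hx : Tendsto (fun n => ‖x n‖) atTop (nhds 1))
    (hy : Tendsto (fun n => ‖y n‖) atTop (nhds 1))
    (hz : Tendsto (fun n => r • x n + (1 - r) • y n) atTop (nhds z))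
    (hz1 : ‖z‖ = 1) : Tendsto (fun n => ‖x n - y n‖) atTop (nhds 0) := by
  set zs : ℕ → X := fun n => r • x n + (1 - r) • y n with hzs
  set u : ℕ → X := fun n => (2 * r) • x n + (1 - 2 * r) • y n with hu
  have hu_eq : ∀ n, u n = (2 : ℝ) • zs n - y n := by
    intro n; simp only [hu, hzs, smul_add, smul_smul]; module
  have hmid : ∀ n, (1 / 2 : ℝ) • (u n + y n) = zs n := by
    intro n; simp only [hu, hzs, smul_add, smul_smul]; module
  have hzn : Tendsto (fun n => ‖zs n‖) atTop (nhds 1) := by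
    have := (continuous_norm.tendsto z).comp hz
    rwa [hz1] at this
  -- squeeze for ‖u n‖
  have hlow : Tendsto (fun n => 2 * ‖zs n‖ - ‖y n‖) atTop (nhds 1) := by
    have := ((hzn.const_mul 2).sub hy)
    rw [show (2:ℝ) * 1 - 1 = 1 by norm_num] at this
    exact this
  have hhigh : Tendsto (fun n => 2 * r * ‖x n‖ + (1 - 2 * r) * ‖y n‖) atTop (nhds 1) := by
    have := (hx.const_mul (2 * r)).add (hy.const_mul (1 - 2 * r))
    simpa using this
  have hun : Tendsto (fun n => ‖u n‖) atTop (nhds 1) := by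
    refine tendsto_of_tendsto_of_tendsto_of_le_of_le hlow hhigh ?_ ?_
    · intro n
      dsimp only
      rw [hu_eq n]
      calc 2 * ‖zs n‖ - ‖y n‖ = ‖(2 : ℝ) • zs n‖ - ‖y n‖ := by
            rw [norm_smul]; simp
        _ ≤ ‖(2 : ℝ) • zs n - y n‖ := norm_sub_norm_le _ _
    · intro n
      dsimp only
      calc ‖u n‖ ≤ ‖(2 * r) • x n‖ + ‖(1 - 2 * r) • y n‖ := norm_add_le _ _
        _ = 2 * r * ‖x n‖ + (1 - 2 * r) * ‖y n‖ := by
            rw [norm_smul, norm_smul, Real.norm_eq_abs, Real.norm_eq_abs,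
              abs_of_pos (by linarith), abs_of_nonneg (by linarith)]
  have hmidt : Tendsto (fun n => (1 / 2 : ℝ) • (u n + y n)) atTop (nhds z) := by
    simpa only [hmid] using hz
  have key := h u y z hun hy hmidt hz1
  have hdiff : ∀ n, ‖u n - y n‖ = 2 * r * ‖x n - y n‖ := by
    intro n
    have : u n - y n = (2 * r) • (x n - y n) := by
      simp only [hu, smul_sub]; module
    rw [this, norm_smul, Real.norm_eq_abs, abs_of_pos (by linarith)]
  have := key.const_mul (1 / (2 * r))
  simp only [hdiff] at this
  have h2r : (2 * r) ≠ 0 := by positivity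
  convert this using 2 with n
  · field_simp
  · simp

theorem mlur_iff_convex_combinations (X : Type*) [NormedAddCommGroup X]
    [NormedSpace ℝ X] [CompleteSpace X] :
    MLUR X ↔
      ∀ r : ℝ, 0 < r → r < 1 → ∀ (x y : ℕ → X) (z : X),
        Tendsto (fun n => ‖x n‖) atTop (nhds 1) →
        Tendsto (fun n => ‖y n‖) atTop (nhds 1) →
        Tendsto (fun n => r • x n + (1 - r) • y n) atTop (nhds z) → ‖z‖ = 1 →
        Tendsto (fun n => ‖x n - y n‖) atTop (nhds 0) := by
  constructor
  · intro h r hr0 hr1 x y z hx hy hz hz1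
    rcases le_or_gt r (1 / 2) with hr | hr
    · exact mlur_aux h hr0 hr x y z hx hy hz hz1
    · have hz' : Tendsto (fun n => (1 - r) • y n + (1 - (1 - r)) • x n) atTop (nhds z) := by
        simpa [add_comm] using hz
      have := mlur_aux h (by linarith : (0:ℝ) < 1 - r) (by linarith) y x z hy hx hz' hz1
      simpa [norm_sub_rev] using this
  · intro h x y z hx hy hz hz1
    apply h (1 / 2) (by norm_num) (by norm_num) x y z hx hy _ hz1
    have : ∀ n, (1 / 2 : ℝ) • x n + (1 - 1 / 2 : ℝ) • y n = (1 / 2 : ℝ) • (x n + y n) := by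
      intro n; rw [smul_add]; norm_num
    simpa only [this] using hz
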